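/- Let β ∈ (0,1) and let x = (x_i) be a sequence with each x_i ∈ [0,1]. If ∑_i x_i ≥ θ for some θ ≥ 0, then ∑_i x_i^β ≥ ⌊θ⌋ + {θ}^β, where {θ} denotes the fractional part of θ. -/

import Mathlib

open Real

private lemma rpow_subadd {a b p : ℝ} (ha : 0 ≤ a) (hb : 0 ≤ b) (hp : 0 ≤ p) (hp1 : p ≤ 1) :
    (a + b) ^ p ≤ a ^ p + b ^ p := by
  have := NNReal.rpow_add_le_add_rpow ⟨a, ha⟩ ⟨b, hb⟩ hp hp1
  exact_mod_cast this

/-- the concavity step: if `f + t = 1 + u` with `u ≤ f ≤ 1`, `u ≤ t ≤ 1`, `0 ≤ u < 1`,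
then `1 + u^β ≤ f^β + t^β`. -/
private lemma concav_step {β u f t : ℝ} (hβ0 : 0 < β) (hβ1 : β < 1)
    (hu0 : 0 ≤ u) (hu1 : u < 1) (huf : u ≤ f) (hf1 : f ≤ 1) (hut : u ≤ t) (ht1 : t ≤ 1)
    (hsum : f + t = 1 + u) : 1 + u ^ β ≤ f ^ β + t ^ β := by
  set l : ℝ := (1 - f) / (1 - u) with hl
  have h1u : 0 < 1 - u := by linarith
  have hl0 : 0 ≤ l := div_nonneg (by linarith) h1u.le
  have hl1 : l ≤ 1 := by
    rw [hl, div_le_one h1u]; linarith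
  have hc := (Real.concaveOn_rpow hβ0.le hβ1.le).2
  have key : ∀ a : ℝ, 0 ≤ a → a ≤ 1 →
      a • (1:ℝ)^β + (1-a) • u^β ≤ (a • 1 + (1-a) • u) ^ β := fun a ha0 ha1 =>
    hc (Set.mem_Ici.2 (by norm_num)) (Set.mem_Ici.2 hu0) ha0 (by linarith) (by ring)
  have h1 := key l hl0 hl1
  have h2 := key (1 - l) (by linarith) (by linarith)
  have e1 : l • (1:ℝ) + (1 - l) • u = t := by
    have : l * (1 - u) = 1 - f := div_mul_cancel₀ _ h1u.ne'
    simp only [smul_eq_mul]; nlinarith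
  have e2 : (1 - l) • (1:ℝ) + (1 - (1 - l)) • u = f := by
    have : l * (1 - u) = 1 - f := div_mul_cancel₀ _ h1u.ne'
    simp only [smul_eq_mul]; nlinarith
  rw [e1] at h1
  rw [e2] at h2
  simp only [Real.one_rpow, smul_eq_mul] at h1 h2
  linarith

/-- main step: `h (s + t) ≤ h s + t^β` for `0 ≤ t ≤ 1`, where `h s = ⌊s⌋ + fract s ^ β`. -/
private lemma h_step {β s t : ℝ} (hβ0 : 0 < β) (hβ1 : β < 1) (ht0 : 0 ≤ t) (ht1 : t ≤ 1) :
    (⌊s + t⌋ : ℝ) + Int.fract (s + t) ^ β ≤ (⌊s⌋ : ℝ) + Int.fract s ^ β + t ^ β := by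
  have hf0 : 0 ≤ Int.fract s := Int.fract_nonneg s
  have hf1 : Int.fract s < 1 := Int.fract_lt_one s
  have hs : (⌊s⌋ : ℝ) + Int.fract s = s := Int.floor_add_fract s
  have e : s + t = ((⌊s⌋ : ℤ) : ℝ) + (Int.fract s + t) := by push_cast; linarith
  rw [e, Int.floor_intCast_add, Int.fract_intCast_add]
  rcases lt_or_ge (Int.fract s + t) 1 with hc | hc
  · have hfl : ⌊Int.fract s + t⌋ = 0 := Int.floor_eq_zero_iff.2 ⟨by linarith, hc⟩
    have hfr : Int.fract (Int.fract s + t) = Int.fract s + t :=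
      Int.fract_eq_self.2 ⟨by linarith, hc⟩
    rw [hfl, hfr]
    push_cast
    have := rpow_subadd hf0 ht0 hβ0.le hβ1.le
    linarith
  · have hfl : ⌊Int.fract s + t⌋ = 1 := by
      rw [Int.floor_eq_iff]
      constructor <;> push_cast <;> linarith
    have hfr : Int.fract (Int.fract s + t) = Int.fract s + t - 1 := by
      rw [Int.fract, hfl]; push_cast; ring
    rw [hfl, hfr]
    push_cast
    have := concav_step hβ0 hβ1 (u := Int.fract s + t - 1) (f := Int.fract s) (t := t)
      (by linarith) (by linarith) (by linarith) hf1.le (by linarith) ht1 (by ring)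
    linarith

private lemma h_mono {β s s' : ℝ} (hβ0 : 0 < β) (hβ1 : β < 1) (hss : s ≤ s') :
    (⌊s⌋ : ℝ) + Int.fract s ^ β ≤ (⌊s'⌋ : ℝ) + Int.fract s' ^ β := by
  have hfl : ⌊s⌋ ≤ ⌊s'⌋ := Int.floor_le_floor hss
  rcases eq_or_lt_of_le hfl with heq | hlt
  · have : Int.fract s ≤ Int.fract s' := by
      have h1 := Int.floor_add_fract s
      have h2 := Int.floor_add_fract s'
      rw [heq] at h1; linarith
    have := Real.rpow_le_rpow (Int.fract_nonneg s) this hβ0.le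
    rw [heq]; linarith
  · have h1 : Int.fract s ^ β ≤ 1 :=
      Real.rpow_le_one (Int.fract_nonneg s) (Int.fract_lt_one s).le hβ0.le
    have h2 : (0:ℝ) ≤ Int.fract s' ^ β := Real.rpow_nonneg (Int.fract_nonneg s') β
    have h3 : (⌊s⌋ : ℝ) + 1 ≤ (⌊s'⌋ : ℝ) := by exact_mod_cast hlt
    linarith

private lemma h_finset {β : ℝ} (hβ0 : 0 < β) (hβ1 : β < 1)
    (x : ℕ → ℝ) (hx : ∀ i, x i ∈ Set.Icc (0 : ℝ) 1) (F : Finset ℕ) :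
    (⌊∑ i ∈ F, x i⌋ : ℝ) + Int.fract (∑ i ∈ F, x i) ^ β ≤ ∑ i ∈ F, x i ^ β := by
  induction F using Finset.cons_induction with
  | empty => simp [Real.zero_rpow hβ0.ne']
  | cons a F ha ih =>
    rw [Finset.sum_cons, Finset.sum_cons]
    calc (⌊x a + ∑ i ∈ F, x i⌋ : ℝ) + Int.fract (x a + ∑ i ∈ F, x i) ^ β
        = (⌊(∑ i ∈ F, x i) + x a⌋ : ℝ) + Int.fract ((∑ i ∈ F, x i) + x a) ^ β := by
          rw [add_comm (x a)]
      _ ≤ ((⌊∑ i ∈ F, x i⌋ : ℝ) + Int.fract (∑ i ∈ F, x i) ^ β) + x a ^ β :=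
          h_step hβ0 hβ1 (hx a).1 (hx a).2
      _ ≤ (∑ i ∈ F, x i ^ β) + x a ^ β := by linarith
      _ = x a ^ β + ∑ i ∈ F, x i ^ β := by ring

theorem stmt_0 (β θ : ℝ) (hβ0 : 0 < β) (hβ1 : β < 1)
    (x : ℕ → ℝ) (hx : ∀ i, x i ∈ Set.Icc (0 : ℝ) 1)
    (hsum : Summable x) (hθ : 0 ≤ θ) (h : θ ≤ ∑' i, x i) :
    ENNReal.ofReal ((⌊θ⌋ : ℝ) + Int.fract θ ^ β) ≤ ∑' i, ENNReal.ofReal (x i ^ β) := by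
  refine ENNReal.le_of_forall_pos_le_add fun ε hε _ => ?_
  set δ : ℝ := min 1 ((ε : ℝ) ^ (β⁻¹)) with hδdef
  have hε' : (0:ℝ) < ε := hε
  have hδ0 : 0 < δ := lt_min one_pos (Real.rpow_pos_of_pos hε' _)
  have hδ1 : δ ≤ 1 := min_le_left _ _
  have hδε : δ ^ β ≤ (ε : ℝ) := by
    calc δ ^ β ≤ ((ε : ℝ) ^ (β⁻¹)) ^ β :=
          Real.rpow_le_rpow hδ0.le (min_le_right _ _) hβ0.le
      _ = (ε : ℝ) := by
          rw [← Real.rpow_mul hε'.le, inv_mul_cancel₀ hβ0.ne', Real.rpow_one]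
  -- find a finite partial sum close to the total
  obtain ⟨N, hN⟩ : ∃ N, (∑' i, x i) - δ < ∑ i ∈ Finset.range N, x i := by
    have := hsum.hasSum.tendsto_sum_nat
    exact (this.eventually (eventually_gt_nhds (by linarith))).exists
  set S := ∑ i ∈ Finset.range N, x i with hS
  have hkey : (⌊θ⌋ : ℝ) + Int.fract θ ^ β ≤ (∑ i ∈ Finset.range N, x i ^ β) + (ε : ℝ) := by
    have hfin := h_finset hβ0 hβ1 x hx (Finset.range N)
    rcases le_or_gt θ S with hc | hc
    · have := h_mono (s := θ) (s' := S) hβ0 hβ1 hc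
      have hεpos : (0:ℝ) ≤ ε := hε'.le
      linarith
    · have hr0 : 0 ≤ θ - S := by linarith
      have hrδ : θ - S ≤ δ := by linarith
      have hstep := h_step (s := S) (t := θ - S) hβ0 hβ1 hr0 (by linarith)
      have hrε : (θ - S) ^ β ≤ (ε : ℝ) :=
        le_trans (Real.rpow_le_rpow hr0 hrδ hβ0.le) hδε
      have : S + (θ - S) = θ := by ring
      rw [this] at hstep
      linarith
  calc ENNReal.ofReal ((⌊θ⌋ : ℝ) + Int.fract θ ^ β)
      ≤ ENNReal.ofReal ((∑ i ∈ Finset.range N, x i ^ β) + (ε : ℝ)) :=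
        ENNReal.ofReal_le_ofReal hkey
    _ = ENNReal.ofReal (∑ i ∈ Finset.range N, x i ^ β) + ENNReal.ofReal (ε : ℝ) :=
        ENNReal.ofReal_add (Finset.sum_nonneg fun i _ => Real.rpow_nonneg (hx i).1 β) hε'.le
    _ = (∑ i ∈ Finset.range N, ENNReal.ofReal (x i ^ β)) + (ε : ENNReal) := by
        rw [ENNReal.ofReal_sum_of_nonneg (fun i _ => Real.rpow_nonneg (hx i).1 β),
          ENNReal.ofReal_coe_nnreal]
    _ ≤ (∑' i, ENNReal.ofReal (x i ^ β)) + ε :=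
        add_le_add_left (ENNReal.sum_le_tsum _) _
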